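/- Let λ ∈ ℂ with λ ∉ {-2, 0, 1}, b ∈ ℂ, and f : ℤ → ℂ satisfy (m - λn)·f(m) - (n - λm)·f(n) = (m-n)·(f(m+n) - b²·n·m) for all m, n ∈ ℤ. If moreover λ ≠ -1, then f(m) = m·f(1) + (b²/(λ+1))·m·(m-1) for all m ∈ ℤ. -/

import Mathlib

theorem stmt_9 (lam : ℂ) (h2 : lam ≠ -2) (h0 : lam ≠ 0) (h1 : lam ≠ 1) (b : ℂ)
    (f : ℤ → ℂ)
    (h : ∀ m n : ℤ,
      ((m : ℂ) - lam * (n : ℂ)) * f m - ((n : ℂ) - lam * (m : ℂ)) * f n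
        = ((m : ℂ) - (n : ℂ)) * (f (m + n) - b ^ 2 * (n : ℂ) * (m : ℂ)))
    (h1' : lam ≠ -1) :
    ∀ m : ℤ, f m = (m : ℂ) * f 1 + (b ^ 2 / (lam + 1)) * (m : ℂ) * ((m : ℂ) - 1) := by
  have hlam1 : lam + 1 ≠ 0 := fun hc => h1' (by linear_combination hc)
  obtain ⟨c, hc, hc'⟩ : ∃ c : ℂ, c * (lam + 1) = b ^ 2 ∧ c = b ^ 2 / (lam + 1) :=
    ⟨b ^ 2 / (lam + 1), div_mul_cancel₀ _ hlam1, rfl⟩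
  obtain ⟨g, hgdef⟩ : ∃ g : ℤ → ℂ,
      ∀ m : ℤ, g m = f m - (m : ℂ) * f 1 - c * (m : ℂ) * ((m : ℂ) - 1) :=
    ⟨_, fun _ => rfl⟩
  have hg : ∀ m n : ℤ, ((m : ℂ) - lam * n) * g m - ((n : ℂ) - lam * m) * g n
      = ((m : ℂ) - n) * g (m + n) := by
    intro m n
    have key := h m n
    rw [hgdef m, hgdef n, hgdef (m + n)]
    push_cast
    linear_combination key + ((m : ℂ) - n) * (m : ℂ) * (n : ℂ) * hc
  have g1 : g 1 = 0 := by rw [hgdef]; push_cast; ring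
  have g0 : g 0 = 0 := by
    have e := hg 1 0
    push_cast at e
    rw [g1] at e
    have : lam * g 0 = 0 := by linear_combination e
    exact (mul_eq_zero.mp this).resolve_left h0
  have gm1 : g (-1) = 0 := by
    have e := hg 1 (-1)
    push_cast at e
    rw [g1, g0] at e
    have : (lam + 1) * g (-1) = 0 := by linear_combination e
    exact (mul_eq_zero.mp this).resolve_left hlam1
  have A : ∀ m : ℤ, ((m : ℂ) - lam) * g m = ((m : ℂ) - 1) * g (m + 1) := by
    intro m
    have e := hg m 1
    push_cast at e
    linear_combination e + ((1 : ℂ) - lam * m) * g1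
  have B : ∀ m : ℤ, ((m : ℂ) + lam) * g m = ((m : ℂ) + 1) * g (m - 1) := by
    intro m
    have e := hg m (-1)
    push_cast at e
    rw [show m + -1 = m - 1 by ring] at e
    linear_combination e + (-(1 : ℂ) - lam * m) * gm1
  have g2 : g 2 = 0 := by
    have e := hg 2 (-1)
    push_cast at e
    rw [g1, gm1] at e
    have : (lam + 2) * g 2 = 0 := by linear_combination e
    have hne : lam + 2 ≠ 0 := fun hcc => h2 (by linear_combination hcc)
    exact (mul_eq_zero.mp this).resolve_left hne
  have gm2 : g (-2) = 0 := by
    have e := A (-2)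
    push_cast at e
    rw [gm1, mul_zero] at e
    have hne : (-2 : ℂ) - lam ≠ 0 := fun hcc => h2 (by linear_combination -hcc)
    exact (mul_eq_zero.mp e).resolve_left hne
  have gz : ∀ m : ℤ, g m = 0 := by
    intro m
    induction m using Int.induction_on with
    | zero => exact g0
    | succ k ih =>
      rcases k with _ | _ | n
      · simpa using g1
      · simpa using g2
      · have ih' : g ((n : ℤ) + 2) = 0 := by
          convert ih using 2 <;> push_cast <;> ring
        have e := A ((n : ℤ) + 2)
        rw [ih', mul_zero] at e
        have hne : (((n : ℤ) + 2 : ℤ) : ℂ) - 1 ≠ 0 := by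
          push_cast
          intro hcc
          exact Nat.cast_add_one_ne_zero (R := ℂ) n (by linear_combination hcc)
        have hz : g ((n : ℤ) + 2 + 1) = 0 := (mul_eq_zero.mp e.symm).resolve_left hne
        convert hz using 2 <;> push_cast <;> ring
    | pred k ih =>
      rcases k with _ | _ | n
      · simpa using gm1
      · simpa using gm2
      · have ih' : g (-((n : ℤ) + 2)) = 0 := by
          convert ih using 2 <;> push_cast <;> ring
        have e := B (-((n : ℤ) + 2))
        rw [ih', mul_zero] at e
        have hne : ((-((n : ℤ) + 2) : ℤ) : ℂ) + 1 ≠ 0 := by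
          push_cast
          intro hcc
          exact Nat.cast_add_one_ne_zero (R := ℂ) n (by linear_combination -hcc)
        have hz : g (-((n : ℤ) + 2) - 1) = 0 := (mul_eq_zero.mp e.symm).resolve_left hne
        convert hz using 2 <;> push_cast <;> ring
  intro m
  have hm := gz m
  rw [hgdef m] at hm
  rw [← hc']
  linear_combination hm
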